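/- Let Π = ⟨π₁, …, πₙ⟩ be a layered plan over L, i.e. each πᵢ is a finite set of pairwise independent STRIPS actions, and suppose Π is applicable from the state s, i.e. pre(πᵢ) is contained in the state obtained by successively applying π₁, …, πᵢ₋₁ to s, for every i. Let lᵢ be any linearization of πᵢ for each i. Then sequential execution of the concatenated list l₁ ++ l₂ ++ ⋯ ++ lₙ from s yields exactly the state γ(s, Π) obtained by successively applying the layers π₁, …, πₙ to s. -/

import Mathlib

namespace STRIPS

/-- A STRIPS action over a type `L` of logical propositions. -/
structure Action (L : Type*) where
  pre : Set L
  add : Set L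
  del : Set L

/-- Applying an action `a` to a state `s`: `γ(s, a) = (s \ del(a)) ∪ add(a)`. -/
def gamma {L : Type*} (s : Set L) (a : Action L) : Set L :=
  (s \ a.del) ∪ a.add

/-- Two actions are independent iff `del(a) ∩ (pre(b) ∪ add(b)) = ∅`
and `del(b) ∩ (pre(a) ∪ add(a)) = ∅`. -/
def Indep {L : Type*} (a b : Action L) : Prop :=
  a.del ∩ (b.pre ∪ b.add) = ∅ ∧ b.del ∩ (a.pre ∪ a.add) = ∅

/-- `pre(π) = ⋃_{a ∈ π} pre(a)`. -/
def preL {L : Type*} (π : Set (Action L)) : Set L := ⋃ a ∈ π, a.pre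

/-- `add(π) = ⋃_{a ∈ π} add(a)`. -/
def addL {L : Type*} (π : Set (Action L)) : Set L := ⋃ a ∈ π, a.add

/-- `del(π) = ⋃_{a ∈ π} del(a)`. -/
def delL {L : Type*} (π : Set (Action L)) : Set L := ⋃ a ∈ π, a.del

/-- Applying an action layer `π` to a state `s`:
`γ(s, π) = (s \ del(π)) ∪ add(π)`. -/
def gammaL {L : Type*} (s : Set L) (π : Set (Action L)) : Set L :=
  (s \ delL π) ∪ addL π

/-- The actions in `π` are pairwise independent. -/
def PairwiseIndep {L : Type*} (π : Set (Action L)) : Prop :=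
  ∀ a ∈ π, ∀ b ∈ π, a ≠ b → Indep a b

/-- `l` is a linearization of `π`: a list enumerating each action of `π`
exactly once. -/
def Linearization {L : Type*} (π : Set (Action L)) (l : List (Action L)) : Prop :=
  l.Nodup ∧ ∀ a, a ∈ l ↔ a ∈ π

/-- Applying a layered plan `Π = ⟨π₁, …, πₙ⟩` to a state `s`:
`γ(s, Π) = γ(γ(s, π₁), ⟨π₂, …, πₙ⟩)`. -/
def gammaP {L : Type*} (s : Set L) (P : List (Set (Action L))) : Set L :=
  P.foldl gammaL s

/-- Let `Π = ⟨π₁, …, πₙ⟩` be a layered plan (each `πᵢ` a finite set of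
pairwise independent actions) applicable from the state `s` (each `pre(πᵢ)`
holds in the state obtained by applying `π₁, …, πᵢ₋₁` to `s`), and let `lᵢ`
be a linearization of `πᵢ` for each `i`. Then sequential execution of
`l₁ ++ l₂ ++ ⋯ ++ lₙ` from `s` yields exactly `γ(s, Π)`. -/

lemma foldl_gamma_pairwise {L : Type*} (l : List (Action L))
    (hp : l.Pairwise Indep) (s : Set L) :
    l.foldl gamma s = (s \ ⋃ a ∈ l, a.del) ∪ ⋃ a ∈ l, a.add := by
  induction l generalizing s with
  | nil => simp
  | cons a t ih =>
    obtain ⟨ha, ht⟩ := List.pairwise_cons.mp hp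
    have key : ∀ b ∈ t, ∀ x, x ∈ a.add → x ∉ b.del := by
      intro b hb x hx
      have := (ha b hb).2
      intro hxd
      exact absurd (Set.mem_inter hxd (Or.inr hx)) (by rw [this]; exact id)
    rw [List.foldl_cons, ih ht]
    ext x
    simp only [gamma, Set.mem_union, Set.mem_diff, Set.mem_iUnion,
      List.mem_cons, exists_prop]
    constructor
    · rintro (⟨(⟨hs, hda⟩ | hadd), hnd2⟩ | ⟨b, hb, hx⟩)
      · refine Or.inl ⟨hs, fun ⟨c, hc, hxc⟩ => ?_⟩
        rcases hc with rfl | hc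
        · exact hda hxc
        · exact hnd2 ⟨c, hc, hxc⟩
      · exact Or.inr ⟨a, Or.inl rfl, hadd⟩
      · exact Or.inr ⟨b, Or.inr hb, hx⟩
    · rintro (⟨hs, hnd2⟩ | ⟨b, (rfl | hb), hx⟩)
      · exact Or.inl ⟨Or.inl ⟨hs, fun h => hnd2 ⟨a, Or.inl rfl, h⟩⟩,
          fun ⟨c, hc, hxc⟩ => hnd2 ⟨c, Or.inr hc, hxc⟩⟩
      · exact Or.inl ⟨Or.inr hx, fun ⟨c, hc, hxc⟩ => key c hc x hx hxc⟩
      · exact Or.inr ⟨b, hb, hx⟩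

lemma foldl_gamma_linearization {L : Type*} {π : Set (Action L)}
    {l : List (Action L)} (hind : PairwiseIndep π) (hl : Linearization π l)
    (s : Set L) : l.foldl gamma s = gammaL s π := by
  obtain ⟨hnd, hmem⟩ := hl
  have hp : l.Pairwise Indep := by
    have hne : ∀ {a b : Action L}, [a, b].Sublist l → a ≠ b :=
      fun h => List.pairwise_iff_forall_sublist.mp hnd h
    rw [List.pairwise_iff_forall_sublist]
    intro a b hab
    exact hind a ((hmem a).mp (hab.subset (by simp)))
      b ((hmem b).mp (hab.subset (by simp))) (hne hab)
  rw [foldl_gamma_pairwise l hp s]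
  have hd : (⋃ a ∈ l, a.del) = delL π := by
    simp only [delL]; ext x; simp [hmem]
  have hadd : (⋃ a ∈ l, a.add) = addL π := by
    simp only [addL]; ext x; simp [hmem]
  rw [hd, hadd]; rfl

theorem join_linearizations_foldl_eq_gammaP {L : Type*} (s : Set L)
    (P : List (Set (Action L)))
    (hfin : ∀ π ∈ P, Set.Finite π)
    (hind : ∀ π ∈ P, PairwiseIndep π)
    (happ : ∀ (i : ℕ) (h : i < P.length),
      preL (P.get ⟨i, h⟩) ⊆ gammaP s (P.take i))
    (ls : List (List (Action L))) (hlen : ls.length = P.length)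
    (hlin : ∀ (i : ℕ) (h : i < P.length),
      Linearization (P.get ⟨i, h⟩) (ls.get ⟨i, by omega⟩)) :
    ls.flatten.foldl gamma s = gammaP s P := by
  induction P generalizing s ls with
  | nil =>
    have : ls = [] := List.length_eq_zero_iff.mp (by simpa using hlen)
    subst this; simp [gammaP]
  | cons π P' ih =>
    obtain ⟨l, ls', rfl⟩ : ∃ l ls', ls = l :: ls' := by
      cases ls with
      | nil => simp at hlen
      | cons a b => exact ⟨a, b, rfl⟩
    simp only [List.flatten_cons, List.foldl_append]
    have hl : Linearization π l := hlin 0 (by simp)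
    rw [foldl_gamma_linearization (hind π (List.mem_cons_self)) hl s]
    have : gammaP s (π :: P') = gammaP (gammaL s π) P' := by simp [gammaP]
    rw [this]
    refine ih (gammaL s π) (fun p hp => hfin p (List.mem_cons_of_mem _ hp))
      (fun p hp => hind p (List.mem_cons_of_mem _ hp)) ?_ ls'
      (by simpa using hlen) ?_
    · intro i h
      have := happ (i + 1) (by simpa using Nat.succ_lt_succ h)
      simpa [gammaP] using this
    · intro i h
      exact hlin (i + 1) (by simpa using Nat.succ_lt_succ h)

end STRIPS
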